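/- Let H be a complex Hilbert space, let (u_n)_{n=1}^∞ be a sequence in H such that ⟨u_m, u_n⟩ = 0 for all m ≠ n, ‖u_n‖ ∈ {0, 1} for every n, and the closed linear span of {u_n : n ≥ 1} equals H. Let (z_n)_{n=1}^∞ be a sequence in H with ‖u_n − z_n‖ < 3^{-n} for all n. Then there exists a sequence (w_n)_{n=1}^∞ in H such that for every x ∈ H the series Σ_{n=1}^∞ ⟨z_n, x⟩ · w_n converges in H to x. -/

import Mathlib

open Filter

/-- If `(u n)_{n ≥ 1}` is a pairwise orthogonal total sequence each of whose members has
norm 0 or 1, and `(z n)` satisfies `‖u n - z n‖ < 3⁻ⁿ`, then there is a sequence `(w n)`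
such that `∑ n, ⟪z n, x⟫ • w n` converges to `x` for every `x ∈ H`. -/
theorem perturbed_orthonormal_exists_identity_decomposition
    {H : Type*} [NormedAddCommGroup H] [InnerProductSpace ℂ H] [CompleteSpace H]
    (u z : ℕ → H)
    (horth : ∀ m n, 1 ≤ m → 1 ≤ n → m ≠ n → (inner ℂ (u m) (u n) : ℂ) = 0)
    (hnorm : ∀ n, 1 ≤ n → ‖u n‖ = 0 ∨ ‖u n‖ = 1)
    (htotal : (Submodule.span ℂ (u '' {n | 1 ≤ n})).topologicalClosure = ⊤)
    (hz : ∀ n, 1 ≤ n → ‖u n - z n‖ < (3 : ℝ) ^ (-(n : ℤ))) :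
    ∃ w : ℕ → H, ∀ x : H,
      Tendsto (fun N => ∑ n ∈ Finset.range N, (inner ℂ (z (n + 1)) x : ℂ) • w (n + 1))
        atTop (nhds x) := by
  classical
  -- the rank-one error operators
  set A : ℕ → H →L[ℂ] H := fun n =>
    (innerSL ℂ (z (n + 1) - u (n + 1))).smulRight (u (n + 1)) with hAdef
  have hu_le : ∀ n, 1 ≤ n → ‖u n‖ ≤ 1 := by
    intro n hn; rcases hnorm n hn with h | h <;> simp [h]
  have hg : ∀ n : ℕ, (3 : ℝ) ^ (-((n : ℕ) + 1 : ℤ)) = (1 / 3 : ℝ) ^ (n + 1) := by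
    intro n
    rw [zpow_neg, one_div, inv_pow]
    norm_cast
  have hAnorm : ∀ n, ‖A n‖ ≤ (1 / 3 : ℝ) ^ (n + 1) := by
    intro n
    have h1 : ‖A n‖ = ‖z (n + 1) - u (n + 1)‖ * ‖u (n + 1)‖ := by
      rw [hAdef]
      rw [ContinuousLinearMap.norm_smulRight_apply, innerSL_apply_norm]
    rw [h1, ← hg n]
    have h2 : ‖z (n + 1) - u (n + 1)‖ ≤ (3 : ℝ) ^ (-((n : ℕ) + 1 : ℤ)) := by
      rw [norm_sub_rev]
      have := hz (n + 1) (Nat.le_add_left 1 n)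
      push_cast at this ⊢
      exact this.le
    have h3 := hu_le (n 

+ 1) (Nat.le_add_left 1 n)
    calc ‖z (n + 1) - u (n + 1)‖ * ‖u (n + 1)‖
        ≤ (3 : ℝ) ^ (-((n : ℕ) + 1 : ℤ)) * 1 := by
          apply mul_le_mul h2 h3 (norm_nonneg _)
          positivity
      _ = _ := mul_one _
  have hgs : Summable (fun n : ℕ => (1 / 3 : ℝ) ^ (n + 1)) := by
    apply Summable.comp_injective
      (summable_geometric_of_lt_one (by norm_num) (by norm_num)) (add_left_injective 1)
  have hgsum : ∑' n : ℕ, (1 / 3 : ℝ) ^ (n + 1) = 1 / 2 := by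
    have h0 : ∀ n : ℕ, (1 / 3 : ℝ) ^ (n + 1) = (1 / 3) * (1 / 3) ^ n := fun n => by ring
    rw [tsum_congr h0, tsum_mul_left,
      tsum_geometric_of_lt_one (by norm_num) (by norm_num)]
    norm_num
  have hAnorms : Summable (fun n => ‖A n‖) :=
    Summable.of_nonneg_of_le (fun n => norm_nonneg _) hAnorm hgs
  have hAsum : Summable A := Summable.of_norm hAnorms
  set E : H →L[ℂ] H := ∑' n, A n with hEdef
  have hEnorm : ‖E‖ < 1 := by
    calc ‖E‖ ≤ ∑' n, ‖A n‖ := norm_tsum_le_tsum_norm hAnorms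
      _ ≤ ∑' n : ℕ, (1 / 3 : ℝ) ^ (n + 1) := Summable.tsum_le_tsum hAnorm hAnorms hgs
      _ = 1 / 2 := hgsum
      _ < 1 := by norm_num
  -- the invertible operator T = 1 + E
  set unit : (H →L[ℂ] H)ˣ := Units.oneSub (-E) (by rwa [norm_neg]) with hunit
  have hval : (unit : H →L[ℂ] H) = 1 + E := by
    rw [hunit, Units.val_oneSub, sub_neg_eq_add]
  set Tinv : H →L[ℂ] H := ↑unit⁻¹ with hTinv
  refine ⟨fun n => Tinv (u n), fun x => ?_⟩
  -- E applied to x is the sum of the rank-one pieces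
  have hEx : HasSum (fun n => (inner ℂ (z (n + 1) - u (n + 1)) x : ℂ) • u (n + 1)) (E x) := by
    have h := hAsum.hasSum.mapL (ContinuousLinearMap.apply ℂ H x)
    simp only [ContinuousLinearMap.apply_apply] at h
    convert h using 2 with n
    simp [hAdef]
  -- Parseval: x is the sum of its coefficients against u
  have hux : HasSum (fun n => (inner ℂ (u (n + 1)) x : ℂ) • u (n + 1)) x := by
    set S : Set ℕ := {n | u (n + 1) ≠ 0} with hS
    set v : S → H := fun i => u (i + 1) with hv
    have hvo : Orthonormal ℂ v := by
      rw [orthonormal_iff_ite]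
      rintro ⟨i, hi⟩ ⟨j, hj⟩
      by_cases hij : (⟨i, hi⟩ : S) = ⟨j, hj⟩
      · rw [if_pos hij]
        obtain rfl : i = j := Subtype.mk_eq_mk.mp hij
        simp only [hv]
        rw [inner_self_eq_norm_sq_to_K]
        rcases hnorm (i + 1) (Nat.le_add_left 1 i) with h | h
        · exact absurd (norm_eq_zero.mp h) hi
        · rw [h]; norm_num
      · have hij' : i ≠ j := fun h => hij (Subtype.ext h)
        rw [if_neg hij]
        exact horth _ _ (Nat.le_add_left 1 i) (Nat.le_add_left 1 j)
          (fun h => hij' (Nat.add_right_cancel h))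
    have hsp : ⊤ ≤ (Submodule.span ℂ (Set.range v)).topologicalClosure := by
      rw [← htotal]
      apply Submodule.topologicalClosure_mono
      rw [Submodule.span_le]
      rintro _ ⟨n, hn, rfl⟩
      by_cases h0 : u n = 0
      · rw [h0]; exact Submodule.zero_mem _
      · apply Submodule.subset_span
        refine ⟨⟨n - 1, ?_⟩, ?_⟩
        · show u (n - 1 + 1) ≠ 0
          rwa [Nat.sub_add_cancel hn]
        · show u (n - 1 + 1) = u n
          rw [Nat.sub_add_cancel hn]
    set b : HilbertBasis S ℂ H := HilbertBasis.mk hvo hsp with hb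
    have hbsum := b.hasSum_repr x
    have hcoe : ⇑b = v := HilbertBasis.coe_mk hvo hsp
    have hbsum' : HasSum (fun i : S => (inner ℂ (u ((i : ℕ) + 1)) x : ℂ) • u ((i : ℕ) + 1)) x := by
      convert hbsum using 2 with i
      rw [b.repr_apply_apply, hcoe]
    have hsupp : Function.support (fun n : ℕ => (inner ℂ (u (n + 1)) x : ℂ) • u (n + 1)) ⊆ S := by
      intro n hn
      simp only [Function.mem_support] at hn
      intro h0
      apply hn
      rw [h0, smul_zero]
    exact (hasSum_subtype_iff_of_support_subset hsupp).mp hbsum'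
  -- hence the z-coefficient sums converge to (1+E) x
  have hzx : HasSum (fun n => (inner ℂ (z (n + 1)) x : ℂ) • u (n + 1)) (x + E x) := by
    have := hux.add hEx
    convert this using 2 with n
    rw [inner_sub_left, sub_smul]
    abel
  -- apply Tinv
  have hfin : HasSum (fun n => (inner ℂ (z (n + 1)) x : ℂ) • Tinv (u (n + 1))) x := by
    have h1 := hzx.mapL Tinv
    have h2 : Tinv (x + E x) = x := by
      have h3 : (unit : H →L[ℂ] H) x = x + E x := by
        rw [hval]; simp
      rw [← h3, hTinv]
      have := unit.inv_mul
      calc (↑unit⁻¹ : H →L[ℂ] H) ((unit : H →L[ℂ] H) x)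
          = ((↑unit⁻¹ * ↑unit : H →L[ℂ] H)) x := rfl
        _ = x := by rw [this]; rfl
    rw [h2] at h1
    convert h1 using 2 with n
    rw [map_smul]
  exact hfin.tendsto_sum_nat
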